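/- Let N ≥ 2, let p ∈ ℤ, and let Y ⊆ [0,1] be a Borel set with λ(Y) > 0. Then for Lebesgue-almost every x ∈ Y there exist T ∈ F(N) and y ∈ Y such that T(x) = y, T is differentiable at x, and T'(x) = N^{−p}. That is, the set of x ∈ Y for which no such T and y exist has Lebesgue measure zero. -/

import Mathlib

/-- A real number is an `N`-adic rational if it equals `k / N^m` for some `k : ℤ`, `m : ℕ`. -/
def IsNAdic (N : ℕ) (x : ℝ) : Prop :=
  ∃ (k : ℤ) (m : ℕ), x = (k : ℝ) / (N : ℝ) ^ m

/-- Membership (as a map of `[0,1]`) in the generalized Thompson group `F(N)`: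
`f 0 = 0`, `f 1 = 1`, and there is a finite partition `0 = a 0 < a 1 < ⋯ < a n = 1`
of `[0,1]` by `N`-adic rationals such that on each piece `[a i, a (i+1)]` the map `f`
is affine with slope an integer power of `N`.  (Such an `f` is automatically an
increasing piecewise-linear homeomorphism of `[0,1]` onto itself, with all
non-differentiability points `N`-adic.) -/
def InFN (N : ℕ) (f : ℝ → ℝ) : Prop :=
  f 0 = 0 ∧ f 1 = 1 ∧
    ∃ (n : ℕ) (a : ℕ → ℝ), 0 < n ∧ a 0 = 0 ∧ a n = 1 ∧
      (∀ i < n, a i < a (i + 1)) ∧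
      (∀ i ≤ n, IsNAdic N (a i)) ∧
      (∀ i < n, ∃ q : ℤ, ∀ x ∈ Set.Icc (a i) (a (i + 1)),
        f x = f (a i) + (N : ℝ) ^ q * (x - a i))

open MeasureTheory

lemma isNAdic_zero (N : ℕ) : IsNAdic N 0 := ⟨0, 0, by simp⟩

lemma isNAdic_one (N : ℕ) : IsNAdic N 1 := ⟨1, 0, by simp⟩

lemma nadic_Npos {N : ℕ} (hN : 2 ≤ N) : (0:ℝ) < N := by
  have : (0:ℕ) < N := by omega
  exact_mod_cast this

lemma isNAdic_add {N : ℕ} (hN : 2 ≤ N) {x y : ℝ} (hx : IsNAdic N x) (hy : IsNAdic N y) :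
    IsNAdic N (x + y) := by
  obtain ⟨k, m, rfl⟩ := hx
  obtain ⟨k', m', rfl⟩ := hy
  have hNR : (N : ℝ) ≠ 0 := (nadic_Npos hN).ne'
  refine ⟨k * (N:ℤ) ^ m' + k' * (N:ℤ) ^ m, m + m', ?_⟩
  field_simp
  push_cast
  ring_nf

lemma isNAdic_zpow_mul {N : ℕ} (hN : 2 ≤ N) (z : ℤ) {x : ℝ} (hx : IsNAdic N x) :
    IsNAdic N ((N : ℝ) ^ z * x) := by
  obtain ⟨k, m, rfl⟩ := hx
  have hNR : (N : ℝ) ≠ 0 := (nadic_Npos hN).ne'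
  rcases le_or_gt 0 z with hz | hz
  · refine ⟨k * (N:ℤ) ^ z.toNat, m, ?_⟩
    rw [show z = (z.toNat : ℤ) from (Int.toNat_of_nonneg hz).symm, zpow_natCast]
    push_cast
    field_simp
    simp only [Int.toNat_natCast]
    ring
  · refine ⟨k, m + (-z).toNat, ?_⟩
    have hz' : z = -((-z).toNat : ℤ) := by omega
    rw [hz', zpow_neg, zpow_natCast]
    field_simp
    rw [neg_neg, Int.toNat_natCast, pow_add]
    ring

lemma isNAdic_dense {N : ℕ} (hN : 2 ≤ N) {u v : ℝ} (h : u < v) :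
    ∃ t : ℝ, IsNAdic N t ∧ u < t ∧ t < v := by
  have hN1 : (1:ℝ) < N := by
    have : (1:ℕ) < N := by omega
    exact_mod_cast this
  obtain ⟨m, hm⟩ := pow_unbounded_of_one_lt ((v - u)⁻¹) hN1
  have hNm : (0:ℝ) < (N:ℝ) ^ m := by positivity
  have hsmall : ((N:ℝ) ^ m)⁻¹ < v - u := by
    exact inv_lt_of_inv_lt₀ (by linarith) hm
  refine ⟨(⌊u * (N:ℝ) ^ m⌋ + 1 : ℤ) / (N:ℝ) ^ m, ⟨_, m, rfl⟩, ?_, ?_⟩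
  · rw [lt_div_iff₀ hNm]
    push_cast
    exact Int.lt_floor_add_one (u * (N:ℝ)^m)
  · rw [div_lt_iff₀ hNm]
    have h1 : (⌊u * (N:ℝ)^m⌋ : ℝ) ≤ u * (N:ℝ)^m := Int.floor_le _
    have h2 : ((N:ℝ)^m)⁻¹ * (N:ℝ)^m = 1 := inv_mul_cancel₀ hNm.ne'
    push_cast
    nlinarith [hsmall, hNm]

lemma nadic_construct {N : ℕ} (hN : 2 ≤ N) (p : ℤ) {x A L : ℝ}
    (hA : IsNAdic N A) (hL : IsNAdic N L)
    (hA0 : 0 < A) (hAx : A < x) (hxL : x < A + L)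
    (hlt1 : A + L + (N:ℝ)^(-p) * L < 1) :
    ∃ T : ℝ → ℝ, InFN N T ∧ HasDerivAt T ((N:ℝ)^(-p)) x ∧
      T x = (N:ℝ)^(-p) * x + (1 - (N:ℝ)^(-p)) * A := by
  set c : ℝ := (N:ℝ)^(-p) with hc_def
  have hNpos : (0:ℝ) < N := nadic_Npos hN
  have hc : 0 < c := zpow_pos hNpos _
  have hL0 : 0 < L := by linarith
  have hcL : 0 < c * L := by positivity
  have hcinv : (N:ℝ)^(p:ℤ) = c⁻¹ := by
    rw [hc_def, ← zpow_neg, neg_neg]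
  set T : ℝ → ℝ := fun u =>
    if u ≤ A then u else if u ≤ A + L then A + c * (u - A)
    else if u ≤ A + L + c * L then A + c * L + c⁻¹ * (u - (A + L)) else u with hT_def
  have hA1 : A < 1 := by linarith
  have hAL1 : A + L < 1 := by linarith
  have hT0 : T 0 = 0 := by
    simp only [hT_def]
    rw [if_pos (by linarith : (0:ℝ) ≤ A)]
  have hT1 : T 1 = 1 := by
    simp only [hT_def]
    rw [if_neg (by linarith), if_neg (by linarith), if_neg (by linarith)]
  have hTA : T A = A := by
    simp only [hT_def]
    rw [if_pos le_rfl]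
  have hTAL : T (A + L) = A + c * L := by
    simp only [hT_def]
    rw [if_neg (by linarith), if_pos le_rfl]
    ring
  have hTALc : T (A + L + c * L) = A + L + c * L := by
    simp only [hT_def]
    rw [if_neg (by linarith), if_neg (by linarith), if_pos le_rfl]
    field_simp
    ring
  refine ⟨T, ⟨hT0, hT1, 4, fun i => if i = 0 then 0 else if i = 1 then A
      else if i = 2 then A + L else if i = 3 then A + L + c * L else 1,
      by norm_num, by norm_num, by norm_num, ?_, ?_, ?_⟩, ?_, ?_⟩
  · intro i hi
    interval_cases i <;> norm_num <;> linarith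
  · intro i hi
    interval_cases i <;> norm_num
    · exact isNAdic_zero N
    · exact hA
    · exact isNAdic_add hN hA hL
    · exact isNAdic_add hN (isNAdic_add hN hA hL) (isNAdic_zpow_mul hN (-p) hL)
    · exact isNAdic_one N
  · intro i hi
    interval_cases i
    · refine ⟨0, fun u hu => ?_⟩
      norm_num at hu ⊢
      rw [hT0]
      simp only [hT_def]
      rw [if_pos hu.2]
      norm_num
    · refine ⟨-p, fun u hu => ?_⟩
      norm_num at hu ⊢
      rw [hTA, hcinv, inv_inv]
      rcases eq_or_lt_of_le hu.1 with h | h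
      · simp only [hT_def]
        rw [if_pos (le_of_eq h.symm), ← h]
        ring
      · simp only [hT_def]
        rw [if_neg (by linarith), if_pos hu.2]
    · refine ⟨p, fun u hu => ?_⟩
      norm_num at hu ⊢
      rw [hTAL, hcinv]
      rcases eq_or_lt_of_le hu.1 with h | h
      · simp only [hT_def]
        rw [if_neg (by linarith), if_pos (by linarith), ← h]
        ring
      · simp only [hT_def]
        rw [if_neg (by linarith), if_neg (by linarith), if_pos hu.2]
    · refine ⟨0, fun u hu => ?_⟩
      norm_num at hu ⊢
      rw [hTALc]
      rcases eq_or_lt_of_le hu.1 with h | h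
      · rw [← h, hTALc]
        ring
      · simp only [hT_def]
        rw [if_neg (by linarith), if_neg (by linarith), if_neg (by linarith)]
        ring
  · have haff : HasDerivAt (fun u : ℝ => A + c * (u - A)) c x := by
      simpa using (((hasDerivAt_id x).sub_const A).const_mul c).const_add A
    refine haff.congr_of_eventuallyEq ?_
    filter_upwards [Ioo_mem_nhds hAx hxL] with u hu
    simp only [hT_def]
    rw [if_neg (by linarith [hu.1]), if_pos (by linarith [hu.2])]
  · simp only [hT_def]
    rw [if_neg (by linarith), if_pos (by linarith)]
    ring

set_option maxHeartbeats 1000000 in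
lemma badNull {N : ℕ} (hN : 2 ≤ N) (p : ℤ) {Y : Set ℝ} (hYmeas : MeasurableSet Y)
    {q : ℝ} (hq : 0 < q) :
    volume (Y ∩ {x : ℝ | ∀ a : ℝ, IsNAdic N a → x - q < a → a < x →
      (N:ℝ)^(-p) * x + (1 - (N:ℝ)^(-p)) * a ∉ Y}) = 0 := by
  set c : ℝ := (N:ℝ)^(-p) with hc_def
  have hNpos : (0:ℝ) < N := nadic_Npos hN
  have hc : 0 < c := zpow_pos hNpos _
  set S : Set ℝ := Y ∩ {x : ℝ | ∀ a : ℝ, IsNAdic N a → x - q < a → a < x →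
      c * x + (1 - c) * a ∉ Y} with hS_def
  have hcount : {a : ℝ | IsNAdic N a}.Countable := by
    have hsub : {a : ℝ | IsNAdic N a} ⊆
        Set.range (fun km : ℤ × ℕ => (km.1 : ℝ) / (N:ℝ) ^ km.2) := by
      rintro x ⟨k, m, rfl⟩
      exact ⟨(k, m), rfl⟩
    exact (Set.countable_range _).mono hsub
  have hSmeas : MeasurableSet S := by
    apply hYmeas.inter
    have heq : {x : ℝ | ∀ a : ℝ, IsNAdic N a → x - q < a → a < x → c * x + (1 - c) * a ∉ Y}
        = ⋂ a ∈ {a : ℝ | IsNAdic N a},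
            ({x : ℝ | x - q < a} ∩ {x : ℝ | a < x} ∩ (fun x => c * x + (1 - c) * a) ⁻¹' Y)ᶜ := by
      ext x
      simp only [Set.mem_setOf_eq, Set.mem_iInter, Set.mem_compl_iff, Set.mem_inter_iff,
        Set.mem_preimage]
      constructor
      · intro h a ha hcon
        exact h a ha hcon.1.1 hcon.1.2 hcon.2
      · intro h a ha h1 h2 hy
        exact h a ha ⟨⟨h1, h2⟩, hy⟩
    rw [heq]
    refine MeasurableSet.biInter hcount (fun a _ => ?_)
    refine MeasurableSet.compl ?_
    refine (MeasurableSet.inter ?_ ?_).inter (((measurable_id.const_mul c).add_const _) hYmeas)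
    · have : {x : ℝ | x - q < a} = Set.Iio (a + q) := by
        ext x; simp only [Set.mem_setOf_eq, Set.mem_Iio]; constructor <;> intro <;> linarith
      rw [this]; exact measurableSet_Iio
    · exact measurableSet_Ioi
  by_contra hpos
  set ε : ℝ := c / (12 * c + 4) with hε_def
  have hε0 : 0 < ε := by positivity
  have hε1 : ε < 1 := by
    rw [hε_def, div_lt_one (by linarith)]
    linarith
  have hε_eq : ε * (12 * c + 4) = c := by
    rw [hε_def]; field_simp
  haveI : Filter.NeBot (ae (volume.restrict S)) := by
    refine ae_neBot.mpr (fun h0 => hpos ?_)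
    rwa [Measure.restrict_eq_zero] at h0
  obtain ⟨x₀, htend, hx₀S⟩ :=
    ((Besicovitch.ae_tendsto_measure_inter_div volume S).and (ae_restrict_mem hSmeas)).exists
  have hev : ∀ᶠ r in nhdsWithin (0:ℝ) (Set.Ioi 0), ENNReal.ofReal (1 - ε) <
      volume (S ∩ Metric.closedBall x₀ r) / volume (Metric.closedBall x₀ r) :=
    htend.eventually (eventually_gt_nhds (by
      rw [show (1 : ENNReal) = ENNReal.ofReal 1 from ENNReal.ofReal_one.symm]
      exact ENNReal.ofReal_lt_ofReal_iff_of_nonneg (by linarith) |>.mpr (by linarith)))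
  rw [Filter.eventually_iff, mem_nhdsGT_iff_exists_Ioo_subset] at hev
  obtain ⟨u, hu0, huP⟩ := hev
  rw [Set.mem_Ioi] at hu0
  have hd : ∀ r : ℝ, 0 < r → r < u →
      ENNReal.ofReal ((1 - ε) * (2 * r)) ≤ volume (S ∩ Metric.closedBall x₀ r) := by
    intro r hr hru
    have h1 : ENNReal.ofReal (1 - ε) <
        volume (S ∩ Metric.closedBall x₀ r) / volume (Metric.closedBall x₀ r) :=
      huP ⟨hr, hru⟩
    rw [Real.volume_closedBall] at h1
    have h2r : ENNReal.ofReal (2 * r) ≠ 0 := by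
      simp only [ne_eq, ENNReal.ofReal_eq_zero, not_le]; linarith
    have h2 := (ENNReal.lt_div_iff_mul_lt (Or.inl h2r) (Or.inl ENNReal.ofReal_ne_top)).mp h1
    rw [← ENNReal.ofReal_mul (by linarith : (0:ℝ) ≤ 1 - ε)] at h2
    exact h2.le
  set δ : ℝ := min (q / 2) (u / (2 * (2 * c + 1))) with hδ_def
  have hδ0 : 0 < δ := by
    apply lt_min (by linarith)
    positivity
  have hδq : 2 * δ ≤ q := by
    have := min_le_left (q / 2) (u / (2 * (2 * c + 1)))
    rw [← hδ_def] at this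
    linarith
  have hδu2 : δ ≤ u / (2 * (2 * c + 1)) := min_le_right _ _
  have hRu : (2 * c + 1) * δ < u := by
    have h1 : δ * (2 * (2 * c + 1)) ≤ u := (le_div_iff₀ (by positivity)).mp hδu2
    nlinarith
  have hδu : δ < u := by nlinarith
  have hR0 : 0 < (2 * c + 1) * δ := by positivity
  obtain ⟨a, haN, ha1, ha2⟩ := isNAdic_dense hN (show x₀ - δ < x₀ - δ / 2 by linarith)
  set A : Set ℝ := S ∩ Set.Ioo a (x₀ + δ / 2) with hA_def
  have hAmeas : MeasurableSet A := hSmeas.inter measurableSet_Ioo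
  have hcover : S ∩ Metric.closedBall x₀ δ ⊆
      A ∪ (Set.Icc (x₀ - δ) a ∪ Set.Icc (x₀ + δ / 2) (x₀ + δ)) := by
    rintro y ⟨hyS, hyB⟩
    rw [Real.closedBall_eq_Icc] at hyB
    rcases le_or_gt y a with h | h
    · exact Or.inr (Or.inl ⟨hyB.1, h⟩)
    rcases lt_or_ge y (x₀ + δ / 2) with h' | h'
    · exact Or.inl ⟨hyS, h, h'⟩
    · exact Or.inr (Or.inr ⟨h', hyB.2⟩)
  have hvolA : ENNReal.ofReal ((1 - ε) * (2 * δ)) ≤ volume A + ENNReal.ofReal δ := by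
    calc ENNReal.ofReal ((1 - ε) * (2 * δ)) ≤ volume (S ∩ Metric.closedBall x₀ δ) :=
          hd δ hδ0 hδu
      _ ≤ volume (A ∪ (Set.Icc (x₀ - δ) a ∪ Set.Icc (x₀ + δ / 2) (x₀ + δ))) :=
          measure_mono hcover
      _ ≤ volume A + volume (Set.Icc (x₀ - δ) a ∪ Set.Icc (x₀ + δ / 2) (x₀ + δ)) :=
          measure_union_le _ _
      _ ≤ volume A + (volume (Set.Icc (x₀ - δ) a) + volume (Set.Icc (x₀ + δ / 2) (x₀ + δ))) :=
          add_le_add_right (measure_union_le _ _) _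
      _ ≤ volume A + ENNReal.ofReal δ := by
          rw [Real.volume_Icc, Real.volume_Icc]
          refine add_le_add_right ?_ _
          rw [← ENNReal.ofReal_add (by linarith) (by linarith)]
          exact ENNReal.ofReal_le_ofReal (by linarith)
  set W : Set ℝ := Metric.closedBall x₀ ((2 * c + 1) * δ) \ S with hW_def
  have hsub : A ⊆ (fun y => c * y + (1 - c) * a) ⁻¹' W := by
    rintro y ⟨hyS, hy1, hy2⟩
    obtain ⟨hyY, hyP⟩ := hyS
    have hnotY : c * y + (1 - c) * a ∉ Y := hyP a haN (by linarith) hy1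
    refine ⟨?_, fun hφS => hnotY hφS.1⟩
    show c * y + (1 - c) * a ∈ Metric.closedBall x₀ ((2 * c + 1) * δ)
    rw [Real.closedBall_eq_Icc]
    rw [Set.mem_Icc]
    have hya : y - a < 3 * δ / 2 := by linarith
    have hya0 : 0 < y - a := by linarith
    have hmul : c * (y - a) ≤ c * (3 * δ / 2) :=
      mul_le_mul_of_nonneg_left hya.le hc.le
    have hmul0 : 0 < c * (y - a) := mul_pos hc hya0
    constructor
    · nlinarith
    · nlinarith
  have hpre : volume ((fun y => c * y + (1 - c) * a) ⁻¹' W)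
      = ENNReal.ofReal c⁻¹ * volume W := by
    have heq : (fun y => c * y + (1 - c) * a) ⁻¹' W
        = (c * ·) ⁻¹' ((fun z => z + (1 - c) * a) ⁻¹' W) := rfl
    rw [heq, Real.volume_preimage_mul_left hc.ne' _, measure_preimage_add_right,
      abs_of_pos (inv_pos.mpr hc)]
  have hkey2 : ENNReal.ofReal c * volume A ≤ volume W := by
    have h1 : volume A ≤ ENNReal.ofReal c⁻¹ * volume W := by
      rw [← hpre]; exact measure_mono hsub
    calc ENNReal.ofReal c * volume A
        ≤ ENNReal.ofReal c * (ENNReal.ofReal c⁻¹ * volume W) := mul_le_mul_right h1 _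
      _ = volume W := by
          rw [← mul_assoc, ← ENNReal.ofReal_mul hc.le, mul_inv_cancel₀ hc.ne',
            ENNReal.ofReal_one, one_mul]
  have hsplit : volume (Metric.closedBall x₀ ((2 * c + 1) * δ) ∩ S) + volume W
      = ENNReal.ofReal (2 * ((2 * c + 1) * δ)) := by
    rw [← Real.volume_closedBall x₀ ((2 * c + 1) * δ)]
    exact measure_inter_add_diff _ hSmeas
  have hKS : ENNReal.ofReal ((1 - ε) * (2 * ((2 * c + 1) * δ)))
      ≤ volume (Metric.closedBall x₀ ((2 * c + 1) * δ) ∩ S) := by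
    have := hd ((2 * c + 1) * δ) hR0 hRu
    rwa [Set.inter_comm] at this
  have main : ENNReal.ofReal ((1 - ε) * (2 * ((2 * c + 1) * δ)))
      + ENNReal.ofReal c * ENNReal.ofReal ((1 - ε) * (2 * δ))
      ≤ ENNReal.ofReal (2 * ((2 * c + 1) * δ)) + ENNReal.ofReal c * ENNReal.ofReal δ := by
    calc ENNReal.ofReal ((1 - ε) * (2 * ((2 * c + 1) * δ)))
        + ENNReal.ofReal c * ENNReal.ofReal ((1 - ε) * (2 * δ))
        ≤ volume (Metric.closedBall x₀ ((2 * c + 1) * δ) ∩ S)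
          + ENNReal.ofReal c * (volume A + ENNReal.ofReal δ) :=
          add_le_add hKS (mul_le_mul_right hvolA _)
      _ = (volume (Metric.closedBall x₀ ((2 * c + 1) * δ) ∩ S)
          + ENNReal.ofReal c * volume A) + ENNReal.ofReal c * ENNReal.ofReal δ := by
          rw [mul_add, add_assoc]
      _ ≤ (volume (Metric.closedBall x₀ ((2 * c + 1) * δ) ∩ S) + volume W)
          + ENNReal.ofReal c * ENNReal.ofReal δ :=
          add_le_add_left (add_le_add_right hkey2 _) _
      _ = ENNReal.ofReal (2 * ((2 * c + 1) * δ)) + ENNReal.ofReal c * ENNReal.ofReal δ := by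
          rw [hsplit]
  rw [← ENNReal.ofReal_mul hc.le, ← ENNReal.ofReal_mul hc.le,
    ← ENNReal.ofReal_add (by nlinarith) (by nlinarith),
    ← ENNReal.ofReal_add (by nlinarith) (by nlinarith)] at main
  have mreal : (1 - ε) * (2 * ((2 * c + 1) * δ)) + c * ((1 - ε) * (2 * δ))
      ≤ 2 * ((2 * c + 1) * δ) + c * δ :=
    (ENNReal.ofReal_le_ofReal_iff (by nlinarith)).mp main
  have h6 : (1 - ε) * (6 * c + 2) ≤ 5 * c + 2 := by
    have h7 : ((1 - ε) * (6 * c + 2)) * δ ≤ (5 * c + 2) * δ := by linear_combination mreal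
    exact le_of_mul_le_mul_right h7 hδ0
  nlinarith [h6, hε_eq, hc, hε0]

/-- For `p ∈ ℤ` and a Borel set `Y ⊆ [0,1]` of positive Lebesgue
measure, for almost every `x ∈ Y` there are `T ∈ F(N)` and `y ∈ Y` with `T(x) = y`,
`T` differentiable at `x` and `T'(x) = N^(−p)`: the set of points of `Y` admitting no
such `T`, `y` is Lebesgue-null. -/
theorem statement15 (N : ℕ) (hN : 2 ≤ N) (p : ℤ)
    (Y : Set ℝ) (hY : Y ⊆ Set.Icc (0 : ℝ) 1) (hYmeas : MeasurableSet Y)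
    (hYpos : 0 < volume Y) :
    volume { x ∈ Y | ¬ ∃ T : ℝ → ℝ, InFN N T ∧
      HasDerivAt T ((N : ℝ) ^ (-p)) x ∧ T x ∈ Y } = 0 := by
  have hNpos : (0:ℝ) < N := nadic_Npos hN
  have hc : (0:ℝ) < (N:ℝ) ^ (-p) := zpow_pos hNpos _
  refine measure_mono_null (t := ({0, 1} : Set ℝ) ∪ ⋃ n : ℕ,
      (Y ∩ {x : ℝ | ∀ a : ℝ, IsNAdic N a → x - (1/(n+1)) < a → a < x →
        (N:ℝ)^(-p) * x + (1 - (N:ℝ)^(-p)) * a ∉ Y})) ?_ ?_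
  · rintro x ⟨hxY, hnot⟩
    by_cases hx0 : x = 0
    · exact Or.inl (Or.inl hx0)
    by_cases hx1 : x = 1
    · exact Or.inl (Or.inr hx1)
    have hx01 := hY hxY
    have hx0' : 0 < x := lt_of_le_of_ne hx01.1 (Ne.symm hx0)
    have hx1' : x < 1 := lt_of_le_of_ne hx01.2 hx1
    have hη : 0 < min x ((1 - x) / ((N:ℝ)^(-p))) := lt_min hx0' (div_pos (by linarith) hc)
    obtain ⟨n, hn⟩ := exists_nat_one_div_lt hη
    refine Or.inr (Set.mem_iUnion.mpr ⟨n, hxY, ?_⟩)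
    intro a haN h1 h2 hy
    apply hnot
    have hamin : x - min x ((1 - x) / ((N:ℝ)^(-p))) < a := by linarith
    have ha0 : 0 < a := by
      have := min_le_left x ((1 - x) / ((N:ℝ)^(-p))); linarith
    have h3 : x - a < (1 - x) / ((N:ℝ)^(-p)) := by
      have := min_le_right x ((1 - x) / ((N:ℝ)^(-p))); linarith
    have h4 : (x - a) * (N:ℝ)^(-p) < 1 - x := (lt_div_iff₀ hc).mp h3
    have hkey : x - a < (1 - a) / (1 + (N:ℝ)^(-p)) := by
      rw [lt_div_iff₀ (by linarith)]
      nlinarith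
    obtain ⟨L, hLN, hL1, hL2⟩ := isNAdic_dense hN hkey
    have hL1' : x < a + L := by linarith
    have hlt1 : a + L + (N:ℝ)^(-p) * L < 1 := by
      have h5 : L * (1 + (N:ℝ)^(-p)) < 1 - a := (lt_div_iff₀ (by linarith)).mp hL2
      nlinarith
    obtain ⟨T, hT, hTd, hTx⟩ := nadic_construct hN p haN hLN ha0 h2 hL1' hlt1
    exact ⟨T, hT, hTd, by rw [hTx]; exact hy⟩
  · refine measure_union_null ?_ (measure_iUnion_null fun n => ?_)
    · exact Set.Countable.measure_zero
        ((Set.countable_singleton (1:ℝ)).insert 0) _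
    · exact badNull hN p hYmeas (one_div_pos.mpr (by positivity) : (0:ℝ) < 1/(n+1))
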